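/- Non-homogenization: Assume σ̄ m₀ > σ̲. Let T > 0 and u₀ : ℝ^N → ℝ be bounded and Lipschitz continuous, and for each ε > 0 let u^ε be a bounded viscosity solution of u_t + σ(x/ε) m(|Du|) = 0 in ℝ^N × (0,T) with u^ε(·,0) = u₀. Then there is no function v : ℝ^N × [0,T) → ℝ such that u^ε converges to v locally uniformly on ℝ^N × [0,T) as ε → 0⁺ (i.e., such that for every compact set K ⊂ ℝ^N × [0,T), sup_{(x,t) ∈ K} |u^ε(x,t) − v(x,t)| → 0 as ε → 0⁺). -/

import Mathlib

open Set Filter MeasureTheory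

noncomputable section

abbrev Euc (N : ℕ) := EuclideanSpace ℝ (Fin N)

def intVec {N : ℕ} (z : Fin N → ℤ) : Euc N :=
  (EuclideanSpace.equiv (Fin N) ℝ).symm (fun i => (z i : ℝ))

def IsZPeriodic {N : ℕ} (u : Euc N → ℝ) : Prop :=
  ∀ (x : Euc N) (z : Fin N → ℤ), u (x + intVec z) = u x

def IsZPeriodicH {N : ℕ} (H : Euc N → Euc N → ℝ) : Prop :=
  ∀ (x p : Euc N) (z : Fin N → ℤ), H (x + intVec z) p = H x p

def superDiff {N : ℕ} (u : Euc N → ℝ) (x : Euc N) : Set (Euc N) :=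
  { q | ∃ φ : Euc N → ℝ, ContDiff ℝ 1 φ ∧ IsZPeriodic φ ∧
        (∀ y, u y - φ y ≤ u x - φ x) ∧ q = gradient φ x }

def subDiff {N : ℕ} (u : Euc N → ℝ) (x : Euc N) : Set (Euc N) :=
  { q | ∃ φ : Euc N → ℝ, ContDiff ℝ 1 φ ∧ IsZPeriodic φ ∧
        (∀ y, u x - φ x ≤ u y - φ y) ∧ q = gradient φ x }

def IsCellSubsolution {N : ℕ} (H : Euc N → Euc N → ℝ) (P : Euc N) (a : ℝ) (u : Euc N → ℝ) : Prop :=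
  ∀ x, ∀ q ∈ superDiff u x, H x (q + P) ≤ a

def IsCellSupersolution {N : ℕ} (H : Euc N → Euc N → ℝ) (P : Euc N) (a : ℝ) (u : Euc N → ℝ) : Prop :=
  ∀ x, ∀ q ∈ subDiff u x, a ≤ H x (q + P)

def IsCellSolution {N : ℕ} (H : Euc N → Euc N → ℝ) (P : Euc N) (u : Euc N → ℝ) (a : ℝ) : Prop :=
  (∃ K : NNReal, LipschitzWith K u) ∧ IsZPeriodic u ∧
    IsCellSubsolution H P a u ∧ IsCellSupersolution H P a u

def IsCoerciveH {N : ℕ} (H : Euc N → Euc N → ℝ) : Prop :=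
  ∀ C : ℝ, ∃ r : ℝ, ∀ x p : Euc N, r ≤ ‖p‖ → C ≤ H x p

def IsLocParaMax {N : ℕ} (T : ℝ) (w φ : Euc N → ℝ → ℝ) (x₀ : Euc N) (t₀ : ℝ) : Prop :=
  ∃ δ > (0:ℝ), ∀ (y : Euc N) (s : ℝ), ‖y - x₀‖ < δ → |s - t₀| < δ → 0 < s → s < T →
    w y s - φ y s ≤ w x₀ t₀ - φ x₀ t₀

def IsLocParaMin {N : ℕ} (T : ℝ) (w φ : Euc N → ℝ → ℝ) (x₀ : Euc N) (t₀ : ℝ) : Prop :=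
  ∃ δ > (0:ℝ), ∀ (y : Euc N) (s : ℝ), ‖y - x₀‖ < δ → |s - t₀| < δ → 0 < s → s < T →
    w x₀ t₀ - φ x₀ t₀ ≤ w y s - φ y s

/-- A bounded viscosity solution of `w_t + G(x, Dw) = 0` in `ℝ^N × (0,T)`
with initial datum `u₀`. -/
def IsParabolicSolution {N : ℕ} (G : Euc N → Euc N → ℝ) (u₀ : Euc N → ℝ) (T : ℝ)
    (w : Euc N → ℝ → ℝ) : Prop :=
  (∀ x, w x 0 = u₀ x) ∧
  ContinuousOn (fun q : Euc N × ℝ => w q.1 q.2) { q : Euc N × ℝ | 0 ≤ q.2 ∧ q.2 < T } ∧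
  (∃ M : ℝ, ∀ (x : Euc N) (t : ℝ), 0 ≤ t → t < T → |w x t| ≤ M) ∧
  (∀ φ : Euc N → ℝ → ℝ, ContDiff ℝ 1 (fun q : Euc N × ℝ => φ q.1 q.2) →
    ∀ (x₀ : Euc N) (t₀ : ℝ), 0 < t₀ → t₀ < T → IsLocParaMax T w φ x₀ t₀ →
      deriv (φ x₀) t₀ + G x₀ (gradient (fun y => φ y t₀) x₀) ≤ 0) ∧
  (∀ φ : Euc N → ℝ → ℝ, ContDiff ℝ 1 (fun q : Euc N × ℝ => φ q.1 q.2) →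
    ∀ (x₀ : Euc N) (t₀ : ℝ), 0 < t₀ → t₀ < T → IsLocParaMin T w φ x₀ t₀ →
      0 ≤ deriv (φ x₀) t₀ + G x₀ (gradient (fun y => φ y t₀) x₀))

lemma le_sqrt_add_sq (a s : ℝ) (hs : 0 ≤ s) : s ≤ Real.sqrt (a ^ 2 + s ^ 2) := by
  calc s = Real.sqrt (s ^ 2) := (Real.sqrt_sq hs).symm
  _ ≤ Real.sqrt (a ^ 2 + s ^ 2) := Real.sqrt_le_sqrt (by nlinarith)

lemma contDiff_sqrt_shift {N : ℕ} (c : ℝ) (hc : 0 < c) (x₁ : Euc N) :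
    ContDiff ℝ 1 fun x : Euc N => Real.sqrt (c + ‖x - x₁‖ ^ 2) := by
  have h1 : ContDiff ℝ 1 fun x : Euc N => c + ‖x - x₁‖ ^ 2 :=
    contDiff_const.add ((contDiff_norm_sq ℝ).comp (contDiff_id.sub contDiff_const))
  rw [contDiff_iff_contDiffAt]
  intro x
  exact (h1.contDiffAt).sqrt (by positivity)

set_option maxHeartbeats 1000000 in
lemma comparison_low {N : ℕ} (G : Euc N → Euc N → ℝ) (u₀ : Euc N → ℝ) (T : ℝ) (hT : 0 < T)
    (u : Euc N → ℝ → ℝ) (hsol : IsParabolicSolution G u₀ T u)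
    (x₁ : Euc N) (A1 Af a1 ag b d : ℝ)
    (hd : 0 < d) (hb : 0 ≤ b) (ha1 : 0 ≤ a1) (hag : 0 ≤ ag)
    (hI1 : ∀ x, A1 - b * Real.sqrt (d ^ 2 + ‖x - x₁‖ ^ 2) ≤ u₀ x)
    (hI2 : ∀ x, Af ≤ u₀ x)
    (hA : ∀ x t, 0 ≤ t → t < T →
        Af - ag * t ≤ A1 - a1 * t - b * Real.sqrt (d ^ 2 + ‖x - x₁‖ ^ 2) →
        ∀ p : Euc N, G x p < a1)
    (hF : ∀ (x : Euc N) (p : Euc N), G x p < ag) :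
    ∀ x t, 0 ≤ t → t < T →
      A1 - a1 * t - b * Real.sqrt (d ^ 2 + ‖x - x₁‖ ^ 2) ≤ u x t := by
  obtain ⟨h0, hcont, ⟨M, hM⟩, hsub, hsup⟩ := hsol
  intro xt tt htt0 httT
  set S : Euc N → ℝ := fun x => Real.sqrt (d ^ 2 + ‖x - x₁‖ ^ 2) with hS
  have hSnn : ∀ x, 0 ≤ S x := fun x => Real.sqrt_nonneg _
  set Wp : Euc N → ℝ → ℝ := fun x t => A1 - a1 * t - b * S x with hWp
  set Wf : ℝ → ℝ := fun t => Af - ag * t with hWf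
  set J : Euc N → ℝ := fun x => Real.sqrt (1 + ‖x - xt‖ ^ 2) with hJ
  have hJ0 : ∀ x, 0 ≤ J x := fun x => Real.sqrt_nonneg _
  have hJge : ∀ x : Euc N, ‖x - xt‖ ≤ J x := by
    intro x
    have := le_sqrt_add_sq 1 ‖x - xt‖ (norm_nonneg _)
    simpa [hJ] using this
  have hJxt : J xt = 1 := by simp [hJ]
  set T2 : ℝ := (tt + T) / 2 with hT2
  have hT2pos : 0 < T2 := by simp only [hT2]; linarith
  have httT2 : tt < T2 := by simp only [hT2]; linarith
  have hT2T : T2 < T := by simp only [hT2]; linarith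
  have hM0 : 0 ≤ M := le_trans (abs_nonneg _) (hM xt tt htt0 httT)
  set Mb : ℝ := M + |A1| + |Af| + 1 with hMb
  have hMbpos : 0 < Mb := by positivity
  set Cx : ℝ := 2 * Mb + 1 with hCx
  have hCxpos : 0 < Cx := by positivity
  have hpsiub : ∀ (x : Euc N) (t : ℝ), 0 ≤ t → max (Wp x t) (Wf t) ≤ |A1| + |Af| := by
    intro x t ht
    have h1 : Wp x t ≤ |A1| + |Af| := by
      have h2 : 0 ≤ b * S x := mul_nonneg hb (hSnn x)
      have h3 : 0 ≤ a1 * t := mul_nonneg ha1 ht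
      have := le_abs_self A1
      have := abs_nonneg Af
      simp only [hWp]; linarith
    have h4 : Wf t ≤ |A1| + |Af| := by
      have h5 : 0 ≤ ag * t := mul_nonneg hag ht
      have := le_abs_self Af
      have := abs_nonneg A1
      simp only [hWf]; linarith
    exact max_le h1 h4
  have key : ∀ γ : ℝ, 0 < γ → ∀ k : ℕ, Wp xt tt - γ - Cx * (tt / T2) ^ k ≤ u xt tt := by
    intro γ hγ k
    set χ : ℝ → ℝ := fun t => Cx * (t / T2) ^ k with hχ
    have hχ0 : ∀ t : ℝ, 0 ≤ t → 0 ≤ χ t := fun t ht =>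
      mul_nonneg hCxpos.le (pow_nonneg (div_nonneg ht hT2pos.le) k)
    have hχbig : ∀ t : ℝ, T2 ≤ t → Cx ≤ χ t := by
      intro t ht
      have h1 : (1:ℝ) ≤ t / T2 := (one_le_div hT2pos).2 ht
      have h2 : (1:ℝ) ≤ (t / T2) ^ k := one_le_pow₀ h1
      calc Cx = Cx * 1 := (mul_one Cx).symm
      _ ≤ Cx * (t / T2) ^ k := by
        exact mul_le_mul_of_nonneg_left h2 hCxpos.le
    set Φ : Euc N → ℝ → ℝ := fun x t => max (Wp x t) (Wf t) - γ * J x - χ t with hΦ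
    set g : Euc N × ℝ → ℝ := fun q => u q.1 q.2 - Φ q.1 q.2 with hg
    by_contra hcon
    push_neg at hcon
    have hgneg : g (xt, tt) < 0 := by
      have h1 : Wp xt tt - γ - χ tt ≤ Φ xt tt := by
        have := le_max_left (Wp xt tt) (Wf tt)
        simp only [hΦ, hJxt]; linarith
      have hcon' : u xt tt < Wp xt tt - γ - χ tt := by
        have hctt : χ tt = Cx * (tt / T2) ^ k := rfl
        rw [hctt]; exact hcon
      have : u xt tt < Φ xt tt := lt_of_lt_of_le hcon' h1
      simp only [hg]
      exact sub_neg.mpr this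
    have hglb : ∀ q : Euc N × ℝ, 0 ≤ q.2 → q.2 < T → -Mb + γ * J q.1 + χ q.2 ≤ g q := by
      intro q h1 h2
      have hu := (abs_le.mp (hM q.1 q.2 h1 h2)).1
      have hps := hpsiub q.1 q.2 h1
      simp only [hg, hΦ, hMb]
      simp only [hMb] at *
      linarith
    set R : ℝ := Mb / γ + 1 with hR
    have hRpos : 0 < R := by positivity
    set C : Set (Euc N × ℝ) := Metric.closedBall xt R ×ˢ Icc 0 T2 with hC
    have hCcomp : IsCompact C := (isCompact_closedBall xt R).prod isCompact_Icc
    have hmemC : (xt, tt) ∈ C := ⟨Metric.mem_closedBall_self hRpos.le, htt0, httT2.le⟩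
    have hCne : C.Nonempty := ⟨(xt, tt), hmemC⟩
    have hCS : ∀ q ∈ C, 0 ≤ q.2 ∧ q.2 < T := fun q hq =>
      ⟨hq.2.1, lt_of_le_of_lt hq.2.2 hT2T⟩
    have hgc : ContinuousOn g C := by
      have hu : ContinuousOn (fun q : Euc N × ℝ => u q.1 q.2) C := hcont.mono hCS
      have hΦc : Continuous (fun q : Euc N × ℝ => Φ q.1 q.2) := by
        simp only [hΦ, hWp, hWf, hJ, hχ, hS]
        have hsq : Continuous Real.sqrt := Real.continuous_sqrt
        fun_prop
      exact hu.sub hΦc.continuousOn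
    obtain ⟨qh, hqhC, hqhmin⟩ := hCcomp.exists_isMinOn hCne hgc
    have hqhneg : g qh < 0 := lt_of_le_of_lt (hqhmin hmemC) hgneg
    have hglob : ∀ q : Euc N × ℝ, 0 ≤ q.2 → q.2 < T → g qh ≤ g q := by
      intro q h1 h2
      by_cases hqC : q ∈ C
      · exact hqhmin hqC
      · refine le_trans hqhneg.le ?_
        have hlow := hglb q h1 h2
        have hq12 : q.1 ∉ Metric.closedBall xt R ∨ q.2 ∉ Icc 0 T2 := by
          by_contra hc; push_neg at hc; exact hqC ⟨hc.1, hc.2⟩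
        rcases hq12 with h | h
        · have hfar : R ≤ ‖q.1 - xt‖ := by
            have := Metric.mem_closedBall.not.mp h
            rw [dist_eq_norm] at this
            linarith [not_le.mp this]
          have hMbJ : Mb ≤ γ * J q.1 := by
            have h3 : Mb / γ ≤ J q.1 := le_trans (by linarith) (le_trans hfar (hJge q.1))
            calc Mb = γ * (Mb / γ) := by field_simp
            _ ≤ γ * J q.1 := mul_le_mul_of_nonneg_left h3 hγ.le
          have := hχ0 q.2 h1
          linarith
        · have hlate : T2 < q.2 := by
            simp only [mem_Icc, not_and, not_le] at h
            exact h h1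
          have hbig := hχbig q.2 hlate.le
          have hJq : 0 ≤ γ * J q.1 := mul_nonneg hγ.le (hJ0 _)
          simp only [hCx] at hbig
          linarith
    have hqhS := hCS qh hqhC
    have hth0 : 0 < qh.2 := by
      rcases lt_or_eq_of_le hqhS.1 with h | h
      · exact h
      · exfalso
        have hg0 : 0 ≤ g qh := by
          have he : u qh.1 qh.2 = u₀ qh.1 := by rw [← h, h0]
          have hWp0 : Wp qh.1 0 ≤ u₀ qh.1 := by
            have := hI1 qh.1
            simp only [hWp, hS]; linarith
          have hWf0 : Wf 0 ≤ u₀ qh.1 := by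
            have := hI2 qh.1
            simp only [hWf]; linarith
          have hmax : max (Wp qh.1 qh.2) (Wf qh.2) ≤ u₀ qh.1 := by
            rw [← h]; exact max_le hWp0 hWf0
          have hJq : 0 ≤ γ * J qh.1 := mul_nonneg hγ.le (hJ0 _)
          have hχq : 0 ≤ χ qh.2 := hχ0 _ hqhS.1
          simp only [hg, hΦ]
          linarith [he]
        linarith
    have hthT2 : qh.2 ≤ T2 := hqhC.2.2
    have hthT : qh.2 < T := hqhS.2
    set D0 : ℝ := Cx * (↑k * (qh.2 / T2) ^ (k - 1) * (1 / T2)) with hD0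
    have hD0nn : 0 ≤ D0 := by
      have h1 : (0:ℝ) ≤ (qh.2 / T2) ^ (k - 1) := pow_nonneg (div_nonneg hth0.le hT2pos.le) _
      have h2 : (0:ℝ) ≤ (k:ℝ) := Nat.cast_nonneg k
      have h3 : (0:ℝ) ≤ 1 / T2 := by positivity
      positivity
    by_cases hbr : Wf qh.2 ≤ Wp qh.1 qh.2
    · -- peak branch
      set Φp : Euc N → ℝ → ℝ := fun x t =>
        A1 - a1 * t - b * Real.sqrt (d ^ 2 + ‖x - x₁‖ ^ 2)
          - γ * Real.sqrt (1 + ‖x - xt‖ ^ 2) - Cx * (t / T2) ^ k with hΦp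
      have hΦpeq : ∀ x t, Φp x t = Wp x t - γ * J x - χ t := by
        intro x t; simp only [hΦp, hWp, hWf, hS, hJ, hχ]
      have hΦple : ∀ x t, Φp x t ≤ Φ x t := by
        intro x t
        rw [hΦpeq]
        have := le_max_left (Wp x t) (Wf t)
        simp only [hΦ]; linarith
      have hΦpeqh : Φp qh.1 qh.2 = Φ qh.1 qh.2 := by
        rw [hΦpeq]
        simp only [hΦ]
        rw [max_eq_left hbr]
      have hloc : IsLocParaMin T u Φp qh.1 qh.2 := by
        refine ⟨1, one_pos, fun y s hy hs hs0 hsT => ?_⟩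
        have h2 : g qh ≤ g (y, s) := hglob (y, s) hs0.le hsT
        have h3 : Φp y s ≤ Φ y s := hΦple y s
        simp only [hg] at h2
        rw [← hΦpeqh] at h2
        linarith
      have hCD : ContDiff ℝ 1 fun q : Euc N × ℝ => Φp q.1 q.2 := by
        simp only [hΦp]
        have h1 := (contDiff_sqrt_shift (d ^ 2) (by positivity) x₁).comp
          (contDiff_fst (E := Euc N) (F := ℝ) (𝕜 := ℝ))
        have h2 := (contDiff_sqrt_shift 1 one_pos xt).comp
          (contDiff_fst (E := Euc N) (F := ℝ) (𝕜 := ℝ))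
        have h3 : ContDiff ℝ 1 (fun q : Euc N × ℝ => Cx * (q.2 / T2) ^ k) :=
          contDiff_const.mul ((contDiff_snd.div_const T2).pow k)
        exact ((((contDiff_const.sub (contDiff_const.mul contDiff_snd)).sub
          (contDiff_const.mul h1)).sub (contDiff_const.mul h2)).sub h3)
      have happ := hsup Φp hCD qh.1 qh.2 hth0 hthT hloc
      have hderiv : deriv (Φp qh.1) qh.2 = 0 - a1 * 1 - 0 - 0 - D0 := by
        have h1 : HasDerivAt (fun t : ℝ => A1 - a1 * t) (0 - a1 * 1) qh.2 :=
          (hasDerivAt_const qh.2 A1).sub ((hasDerivAt_id qh.2).const_mul a1)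
        have h2 : HasDerivAt (fun t : ℝ => Cx * (t / T2) ^ k) D0 qh.2 := by
          have := (((hasDerivAt_id qh.2).div_const T2).pow k).const_mul Cx
          simpa [hD0] using this
        have h4 : HasDerivAt (Φp qh.1) (0 - a1 * 1 - 0 - 0 - D0) qh.2 := by
          simp only [hΦp]
          exact (((h1.sub_const (b * Real.sqrt (d ^ 2 + ‖qh.1 - x₁‖ ^ 2))).sub_const
            (γ * Real.sqrt (1 + ‖qh.1 - xt‖ ^ 2))).sub h2).congr_deriv (by ring)
        exact h4.deriv
      have hbr' : Af - ag * qh.2 ≤ A1 - a1 * qh.2 - b * Real.sqrt (d ^ 2 + ‖qh.1 - x₁‖ ^ 2) := by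
        have := hbr
        simp only [hWp, hWf, hS] at this
        exact this
      have hGlt := hA qh.1 qh.2 hth0.le hthT hbr' (gradient (fun y => Φp y qh.2) qh.1)
      rw [hderiv] at happ
      linarith
    · -- floor branch
      push_neg at hbr
      set Φf : Euc N → ℝ → ℝ := fun x t =>
        Af - ag * t - γ * Real.sqrt (1 + ‖x - xt‖ ^ 2) - Cx * (t / T2) ^ k with hΦf
      have hΦfeq : ∀ x t, Φf x t = Wf t - γ * J x - χ t := by
        intro x t; simp only [hΦf, hWf, hJ, hχ]
      have hΦfle : ∀ x t, Φf x t ≤ Φ x t := by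
        intro x t
        rw [hΦfeq]
        have := le_max_right (Wp x t) (Wf t)
        simp only [hΦ]; linarith
      have hΦfeqh : Φf qh.1 qh.2 = Φ qh.1 qh.2 := by
        rw [hΦfeq]
        simp only [hΦ]
        rw [max_eq_right hbr.le]
      have hloc : IsLocParaMin T u Φf qh.1 qh.2 := by
        refine ⟨1, one_pos, fun y s hy hs hs0 hsT => ?_⟩
        have h2 : g qh ≤ g (y, s) := hglob (y, s) hs0.le hsT
        have h3 : Φf y s ≤ Φ y s := hΦfle y s
        simp only [hg] at h2
        rw [← hΦfeqh] at h2
        linarith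
      have hCD : ContDiff ℝ 1 fun q : Euc N × ℝ => Φf q.1 q.2 := by
        simp only [hΦf]
        have h2 := (contDiff_sqrt_shift 1 one_pos xt).comp
          (contDiff_fst (E := Euc N) (F := ℝ) (𝕜 := ℝ))
        have h3 : ContDiff ℝ 1 (fun q : Euc N × ℝ => Cx * (q.2 / T2) ^ k) :=
          contDiff_const.mul ((contDiff_snd.div_const T2).pow k)
        exact (((contDiff_const.sub (contDiff_const.mul contDiff_snd)).sub
          (contDiff_const.mul h2)).sub h3)
      have happ := hsup Φf hCD qh.1 qh.2 hth0 hthT hloc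
      have hderiv : deriv (Φf qh.1) qh.2 = 0 - ag * 1 - 0 - D0 := by
        have h1 : HasDerivAt (fun t : ℝ => Af - ag * t) (0 - ag * 1) qh.2 :=
          (hasDerivAt_const qh.2 Af).sub ((hasDerivAt_id qh.2).const_mul ag)
        have h2 : HasDerivAt (fun t : ℝ => Cx * (t / T2) ^ k) D0 qh.2 := by
          have := (((hasDerivAt_id qh.2).div_const T2).pow k).const_mul Cx
          simpa [hD0] using this
        have h4 : HasDerivAt (Φf qh.1) (0 - ag * 1 - 0 - D0) qh.2 := by
          simp only [hΦf]
          exact ((h1.sub_const (γ * Real.sqrt (1 + ‖qh.1 - xt‖ ^ 2))).sub h2).congr_deriv (by ring)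
        exact h4.deriv
      have hGlt := hF qh.1 (gradient (fun y => Φf y qh.2) qh.1)
      rw [hderiv] at happ
      linarith
  -- pass to the limit
  have hq01 : 0 ≤ tt / T2 := div_nonneg htt0 hT2pos.le
  have hq1 : tt / T2 < 1 := (div_lt_one hT2pos).2 httT2
  have hγfin : ∀ γ : ℝ, 0 < γ → Wp xt tt - γ ≤ u xt tt := by
    intro γ hγ
    have hlim : Tendsto (fun k : ℕ => Wp xt tt - γ - Cx * (tt / T2) ^ k) atTop
        (nhds (Wp xt tt - γ - Cx * 0)) :=
      tendsto_const_nhds.sub ((tendsto_pow_atTop_nhds_zero_of_lt_one hq01 hq1).const_mul Cx)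
    have := le_of_tendsto' hlim (fun k => key γ hγ k)
    simpa using this
  have : Wp xt tt ≤ u xt tt := by
    refine le_of_forall_pos_le_add fun γ hγ => ?_
    have := hγfin γ hγ
    linarith
  simpa [hWp, hS] using this
set_option maxHeartbeats 1000000 in
lemma comparison_up {N : ℕ} (G : Euc N → Euc N → ℝ) (u₀ : Euc N → ℝ) (T : ℝ) (hT : 0 < T)
    (u : Euc N → ℝ → ℝ) (hsol : IsParabolicSolution G u₀ T u)
    (x₀ : Euc N) (A0 Bf a0 af b d : ℝ)
    (hd : 0 < d) (hb : 0 ≤ b) (ha0 : 0 ≤ a0) (haf : 0 ≤ af)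
    (hI1 : ∀ x, u₀ x ≤ A0 + b * Real.sqrt (d ^ 2 + ‖x - x₀‖ ^ 2))
    (hI2 : ∀ x, u₀ x ≤ Bf)
    (hA : ∀ x t, 0 ≤ t → t < T →
        A0 - a0 * t + b * Real.sqrt (d ^ 2 + ‖x - x₀‖ ^ 2) ≤ Bf - af * t →
        ∀ p : Euc N, a0 < G x p)
    (hF : ∀ (x : Euc N) (p : Euc N), af < G x p) :
    ∀ x t, 0 ≤ t → t < T →
      u x t ≤ A0 - a0 * t + b * Real.sqrt (d ^ 2 + ‖x - x₀‖ ^ 2) := by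
  obtain ⟨h0, hcont, ⟨M, hM⟩, hsub, hsup⟩ := hsol
  intro xt tt htt0 httT
  set S : Euc N → ℝ := fun x => Real.sqrt (d ^ 2 + ‖x - x₀‖ ^ 2) with hS
  have hSnn : ∀ x, 0 ≤ S x := fun x => Real.sqrt_nonneg _
  set Vd : Euc N → ℝ → ℝ := fun x t => A0 - a0 * t + b * S x with hVd
  set Vf : ℝ → ℝ := fun t => Bf - af * t with hVf
  set J : Euc N → ℝ := fun x => Real.sqrt (1 + ‖x - xt‖ ^ 2) with hJ
  have hJ0 : ∀ x, 0 ≤ J x := fun x => Real.sqrt_nonneg _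
  have hJge : ∀ x : Euc N, ‖x - xt‖ ≤ J x := by
    intro x
    have := le_sqrt_add_sq 1 ‖x - xt‖ (norm_nonneg _)
    simpa [hJ] using this
  have hJxt : J xt = 1 := by simp [hJ]
  set T2 : ℝ := (tt + T) / 2 with hT2
  have hT2pos : 0 < T2 := by simp only [hT2]; linarith
  have httT2 : tt < T2 := by simp only [hT2]; linarith
  have hT2T : T2 < T := by simp only [hT2]; linarith
  have hM0 : 0 ≤ M := le_trans (abs_nonneg _) (hM xt tt htt0 httT)
  set Mb : ℝ := M + |A0| + |Bf| + (a0 + af) * T + 1 with hMb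
  have hMbpos : 0 < Mb := by positivity
  set Cx : ℝ := 2 * Mb + 1 with hCx
  have hCxpos : 0 < Cx := by positivity
  have hpsilb : ∀ (x : Euc N) (t : ℝ), 0 ≤ t → t < T →
      -(|A0| + |Bf| + (a0 + af) * T) ≤ min (Vd x t) (Vf t) := by
    intro x t ht htT'
    have ha0t : a0 * t ≤ a0 * T := mul_le_mul_of_nonneg_left htT'.le ha0
    have haft : af * t ≤ af * T := mul_le_mul_of_nonneg_left htT'.le haf
    have h2 : 0 ≤ b * S x := mul_nonneg hb (hSnn x)
    have hA0 := neg_abs_le A0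
    have hBf := neg_abs_le Bf
    have hafT : 0 ≤ af * T := mul_nonneg haf hT.le
    have ha0T : 0 ≤ a0 * T := mul_nonneg ha0 hT.le
    have habs1 : 0 ≤ |A0| := abs_nonneg A0
    have habs2 : 0 ≤ |Bf| := abs_nonneg Bf
    refine le_min ?_ ?_
    · simp only [hVd]; nlinarith
    · simp only [hVf]; nlinarith
  have key : ∀ γ : ℝ, 0 < γ → ∀ k : ℕ, u xt tt ≤ Vd xt tt + γ + Cx * (tt / T2) ^ k := by
    intro γ hγ k
    set χ : ℝ → ℝ := fun t => Cx * (t / T2) ^ k with hχ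
    have hχ0 : ∀ t : ℝ, 0 ≤ t → 0 ≤ χ t := fun t ht =>
      mul_nonneg hCxpos.le (pow_nonneg (div_nonneg ht hT2pos.le) k)
    have hχbig : ∀ t : ℝ, T2 ≤ t → Cx ≤ χ t := by
      intro t ht
      have h1 : (1:ℝ) ≤ t / T2 := (one_le_div hT2pos).2 ht
      have h2 : (1:ℝ) ≤ (t / T2) ^ k := one_le_pow₀ h1
      calc Cx = Cx * 1 := (mul_one Cx).symm
      _ ≤ Cx * (t / T2) ^ k := by
        exact mul_le_mul_of_nonneg_left h2 hCxpos.le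
    set Φ : Euc N → ℝ → ℝ := fun x t => min (Vd x t) (Vf t) + γ * J x + χ t with hΦ
    set g : Euc N × ℝ → ℝ := fun q => Φ q.1 q.2 - u q.1 q.2 with hg
    by_contra hcon
    push_neg at hcon
    have hgneg : g (xt, tt) < 0 := by
      have h1 : Φ xt tt ≤ Vd xt tt + γ + χ tt := by
        have := min_le_left (Vd xt tt) (Vf tt)
        simp only [hΦ, hJxt]; linarith
      have hcon' : Vd xt tt + γ + χ tt < u xt tt := by
        have hctt : χ tt = Cx * (tt / T2) ^ k := rfl
        rw [hctt]; exact hcon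
      have : Φ xt tt < u xt tt := lt_of_le_of_lt h1 hcon'
      simp only [hg]
      exact sub_neg.mpr this
    have hglb : ∀ q : Euc N × ℝ, 0 ≤ q.2 → q.2 < T → -Mb + γ * J q.1 + χ q.2 ≤ g q := by
      intro q h1 h2
      have hu := (abs_le.mp (hM q.1 q.2 h1 h2)).2
      have hps := hpsilb q.1 q.2 h1 h2
      simp only [hg, hΦ, hMb]
      simp only [hMb] at *
      linarith
    set R : ℝ := Mb / γ + 1 with hR
    have hRpos : 0 < R := by positivity
    set C : Set (Euc N × ℝ) := Metric.closedBall xt R ×ˢ Icc 0 T2 with hC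
    have hCcomp : IsCompact C := (isCompact_closedBall xt R).prod isCompact_Icc
    have hmemC : (xt, tt) ∈ C := ⟨Metric.mem_closedBall_self hRpos.le, htt0, httT2.le⟩
    have hCne : C.Nonempty := ⟨(xt, tt), hmemC⟩
    have hCS : ∀ q ∈ C, 0 ≤ q.2 ∧ q.2 < T := fun q hq =>
      ⟨hq.2.1, lt_of_le_of_lt hq.2.2 hT2T⟩
    have hgc : ContinuousOn g C := by
      have hu : ContinuousOn (fun q : Euc N × ℝ => u q.1 q.2) C := hcont.mono hCS
      have hΦc : Continuous (fun q : Euc N × ℝ => Φ q.1 q.2) := by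
        simp only [hΦ, hVd, hVf, hJ, hχ, hS]
        have hsq : Continuous Real.sqrt := Real.continuous_sqrt
        fun_prop
      exact hΦc.continuousOn.sub hu
    obtain ⟨qh, hqhC, hqhmin⟩ := hCcomp.exists_isMinOn hCne hgc
    have hqhneg : g qh < 0 := lt_of_le_of_lt (hqhmin hmemC) hgneg
    have hglob : ∀ q : Euc N × ℝ, 0 ≤ q.2 → q.2 < T → g qh ≤ g q := by
      intro q h1 h2
      by_cases hqC : q ∈ C
      · exact hqhmin hqC
      · refine le_trans hqhneg.le ?_
        have hlow := hglb q h1 h2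
        have hq12 : q.1 ∉ Metric.closedBall xt R ∨ q.2 ∉ Icc 0 T2 := by
          by_contra hc; push_neg at hc; exact hqC ⟨hc.1, hc.2⟩
        rcases hq12 with h | h
        · have hfar : R ≤ ‖q.1 - xt‖ := by
            have := Metric.mem_closedBall.not.mp h
            rw [dist_eq_norm] at this
            linarith [not_le.mp this]
          have hMbJ : Mb ≤ γ * J q.1 := by
            have h3 : Mb / γ ≤ J q.1 := le_trans (by linarith) (le_trans hfar (hJge q.1))
            calc Mb = γ * (Mb / γ) := by field_simp
            _ ≤ γ * J q.1 := mul_le_mul_of_nonneg_left h3 hγ.le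
          have := hχ0 q.2 h1
          linarith
        · have hlate : T2 < q.2 := by
            simp only [mem_Icc, not_and, not_le] at h
            exact h h1
          have hbig := hχbig q.2 hlate.le
          have hJq : 0 ≤ γ * J q.1 := mul_nonneg hγ.le (hJ0 _)
          simp only [hCx] at hbig
          linarith
    have hqhS := hCS qh hqhC
    have hth0 : 0 < qh.2 := by
      rcases lt_or_eq_of_le hqhS.1 with h | h
      · exact h
      · exfalso
        have hg0 : 0 ≤ g qh := by
          have he : u qh.1 qh.2 = u₀ qh.1 := by rw [← h, h0]
          have hVd0 : u₀ qh.1 ≤ Vd qh.1 0 := by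
            have := hI1 qh.1
            simp only [hVd, hS]; linarith
          have hVf0 : u₀ qh.1 ≤ Vf 0 := by
            have := hI2 qh.1
            simp only [hVf]; linarith
          have hmin : u₀ qh.1 ≤ min (Vd qh.1 qh.2) (Vf qh.2) := by
            rw [← h]; exact le_min hVd0 hVf0
          have hJq : 0 ≤ γ * J qh.1 := mul_nonneg hγ.le (hJ0 _)
          have hχq : 0 ≤ χ qh.2 := hχ0 _ hqhS.1
          simp only [hg, hΦ]
          linarith [he]
        linarith
    have hthT2 : qh.2 ≤ T2 := hqhC.2.2
    have hthT : qh.2 < T := hqhS.2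
    set D0 : ℝ := Cx * (↑k * (qh.2 / T2) ^ (k - 1) * (1 / T2)) with hD0
    have hD0nn : 0 ≤ D0 := by
      have h1 : (0:ℝ) ≤ (qh.2 / T2) ^ (k - 1) := pow_nonneg (div_nonneg hth0.le hT2pos.le) _
      have h2 : (0:ℝ) ≤ (k:ℝ) := Nat.cast_nonneg k
      have h3 : (0:ℝ) ≤ 1 / T2 := by positivity
      positivity
    by_cases hbr : Vd qh.1 qh.2 ≤ Vf qh.2
    · -- dip branch
      set Φd : Euc N → ℝ → ℝ := fun x t =>
        A0 - a0 * t + b * Real.sqrt (d ^ 2 + ‖x - x₀‖ ^ 2)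
          + γ * Real.sqrt (1 + ‖x - xt‖ ^ 2) + Cx * (t / T2) ^ k with hΦd
      have hΦdeq : ∀ x t, Φd x t = Vd x t + γ * J x + χ t := by
        intro x t; simp only [hΦd, hVd, hS, hJ, hχ]
      have hΦdge : ∀ x t, Φ x t ≤ Φd x t := by
        intro x t
        rw [hΦdeq]
        have := min_le_left (Vd x t) (Vf t)
        simp only [hΦ]; linarith
      have hΦdeqh : Φd qh.1 qh.2 = Φ qh.1 qh.2 := by
        rw [hΦdeq]
        simp only [hΦ]
        rw [min_eq_left hbr]
      have hloc : IsLocParaMax T u Φd qh.1 qh.2 := by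
        refine ⟨1, one_pos, fun y s hy hs hs0 hsT => ?_⟩
        have h2 : g qh ≤ g (y, s) := hglob (y, s) hs0.le hsT
        have h3 : Φ y s ≤ Φd y s := hΦdge y s
        simp only [hg] at h2
        rw [← hΦdeqh] at h2
        linarith
      have hCD : ContDiff ℝ 1 fun q : Euc N × ℝ => Φd q.1 q.2 := by
        simp only [hΦd]
        have h1 := (contDiff_sqrt_shift (d ^ 2) (by positivity) x₀).comp
          (contDiff_fst (E := Euc N) (F := ℝ) (𝕜 := ℝ))
        have h2 := (contDiff_sqrt_shift 1 one_pos xt).comp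
          (contDiff_fst (E := Euc N) (F := ℝ) (𝕜 := ℝ))
        have h3 : ContDiff ℝ 1 (fun q : Euc N × ℝ => Cx * (q.2 / T2) ^ k) :=
          contDiff_const.mul ((contDiff_snd.div_const T2).pow k)
        exact ((((contDiff_const.sub (contDiff_const.mul contDiff_snd)).add
          (contDiff_const.mul h1)).add (contDiff_const.mul h2)).add h3)
      have happ := hsub Φd hCD qh.1 qh.2 hth0 hthT hloc
      have hderiv : deriv (Φd qh.1) qh.2 = 0 - a0 * 1 + 0 + 0 + D0 := by
        have h1 : HasDerivAt (fun t : ℝ => A0 - a0 * t) (0 - a0 * 1) qh.2 :=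
          (hasDerivAt_const qh.2 A0).sub ((hasDerivAt_id qh.2).const_mul a0)
        have h2 : HasDerivAt (fun t : ℝ => Cx * (t / T2) ^ k) D0 qh.2 := by
          have := (((hasDerivAt_id qh.2).div_const T2).pow k).const_mul Cx
          simpa [hD0] using this
        have h4 : HasDerivAt (Φd qh.1) (0 - a0 * 1 + 0 + 0 + D0) qh.2 := by
          simp only [hΦd]
          exact (((h1.add_const (b * Real.sqrt (d ^ 2 + ‖qh.1 - x₀‖ ^ 2))).add_const
            (γ * Real.sqrt (1 + ‖qh.1 - xt‖ ^ 2))).add h2).congr_deriv (by ring)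
        exact h4.deriv
      have hbr' : A0 - a0 * qh.2 + b * Real.sqrt (d ^ 2 + ‖qh.1 - x₀‖ ^ 2) ≤ Bf - af * qh.2 := by
        have := hbr
        simp only [hVd, hVf, hS] at this
        exact this
      have hGgt := hA qh.1 qh.2 hth0.le hthT hbr' (gradient (fun y => Φd y qh.2) qh.1)
      rw [hderiv] at happ
      linarith
    · -- floor branch
      push_neg at hbr
      set Φf : Euc N → ℝ → ℝ := fun x t =>
        Bf - af * t + γ * Real.sqrt (1 + ‖x - xt‖ ^ 2) + Cx * (t / T2) ^ k with hΦf
      have hΦfeq : ∀ x t, Φf x t = Vf t + γ * J x + χ t := by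
        intro x t; simp only [hΦf, hVf, hJ, hχ]
      have hΦfge : ∀ x t, Φ x t ≤ Φf x t := by
        intro x t
        rw [hΦfeq]
        have := min_le_right (Vd x t) (Vf t)
        simp only [hΦ]; linarith
      have hΦfeqh : Φf qh.1 qh.2 = Φ qh.1 qh.2 := by
        rw [hΦfeq]
        simp only [hΦ]
        rw [min_eq_right hbr.le]
      have hloc : IsLocParaMax T u Φf qh.1 qh.2 := by
        refine ⟨1, one_pos, fun y s hy hs hs0 hsT => ?_⟩
        have h2 : g qh ≤ g (y, s) := hglob (y, s) hs0.le hsT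
        have h3 : Φ y s ≤ Φf y s := hΦfge y s
        simp only [hg] at h2
        rw [← hΦfeqh] at h2
        linarith
      have hCD : ContDiff ℝ 1 fun q : Euc N × ℝ => Φf q.1 q.2 := by
        simp only [hΦf]
        have h2 := (contDiff_sqrt_shift 1 one_pos xt).comp
          (contDiff_fst (E := Euc N) (F := ℝ) (𝕜 := ℝ))
        have h3 : ContDiff ℝ 1 (fun q : Euc N × ℝ => Cx * (q.2 / T2) ^ k) :=
          contDiff_const.mul ((contDiff_snd.div_const T2).pow k)
        exact (((contDiff_const.sub (contDiff_const.mul contDiff_snd)).add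
          (contDiff_const.mul h2)).add h3)
      have happ := hsub Φf hCD qh.1 qh.2 hth0 hthT hloc
      have hderiv : deriv (Φf qh.1) qh.2 = 0 - af * 1 + 0 + D0 := by
        have h1 : HasDerivAt (fun t : ℝ => Bf - af * t) (0 - af * 1) qh.2 :=
          (hasDerivAt_const qh.2 Bf).sub ((hasDerivAt_id qh.2).const_mul af)
        have h2 : HasDerivAt (fun t : ℝ => Cx * (t / T2) ^ k) D0 qh.2 := by
          have := (((hasDerivAt_id qh.2).div_const T2).pow k).const_mul Cx
          simpa [hD0] using this
        have h4 : HasDerivAt (Φf qh.1) (0 - af * 1 + 0 + D0) qh.2 := by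
          simp only [hΦf]
          exact ((h1.add_const (γ * Real.sqrt (1 + ‖qh.1 - xt‖ ^ 2))).add h2).congr_deriv (by ring)
        exact h4.deriv
      have hGgt := hF qh.1 (gradient (fun y => Φf y qh.2) qh.1)
      rw [hderiv] at happ
      linarith
  -- pass to the limit
  have hq01 : 0 ≤ tt / T2 := div_nonneg htt0 hT2pos.le
  have hq1 : tt / T2 < 1 := (div_lt_one hT2pos).2 httT2
  have hγfin : ∀ γ : ℝ, 0 < γ → u xt tt ≤ Vd xt tt + γ := by
    intro γ hγ
    have hlim : Tendsto (fun k : ℕ => Vd xt tt + γ + Cx * (tt / T2) ^ k) atTop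
        (nhds (Vd xt tt + γ + Cx * 0)) :=
      tendsto_const_nhds.add ((tendsto_pow_atTop_nhds_zero_of_lt_one hq01 hq1).const_mul Cx)
    have := ge_of_tendsto' hlim (fun k => key γ hγ k)
    simpa using this
  have : u xt tt ≤ Vd xt tt := le_of_forall_pos_le_add hγfin
  simpa [hVd, hS] using this


lemma norm_le_sqrt_card {N : ℕ} (y : Euc N) (h : ∀ i, |y i| ≤ 1) : ‖y‖ ≤ Real.sqrt N := by
  rw [EuclideanSpace.norm_eq]
  apply Real.sqrt_le_sqrt
  have hb : ∀ i : Fin N, ‖y i‖ ^ 2 ≤ 1 := by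
    intro i
    have := h i
    rw [Real.norm_eq_abs]
    nlinarith [abs_nonneg (y i)]
  calc (∑ i, ‖y i‖ ^ 2) ≤ ∑ _i : Fin N, (1:ℝ) := Finset.sum_le_sum fun i _ => hb i
  _ = N := by simp

set_option maxHeartbeats 1600000 in
/-- Non-homogenization: if `σ̄ m₀ > σ̲` then the solutions `u^ε`
do not converge locally uniformly on `ℝ^N × [0,T)` to any function as `ε → 0⁺`. -/
theorem non_homogenization {N : ℕ} (hN : 1 ≤ N)
    (σ : Euc N → ℝ) (m : ℝ → ℝ)
    (hσc : Continuous σ) (hσp : IsZPeriodic σ) (hσpos : ∀ x, 0 < σ x)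
    (hm01 : ∀ r : ℝ, 0 ≤ r → 0 < m r ∧ m r < 1)
    (hmLip : ∃ L : NNReal, LipschitzOnWith L m (Set.Ici 0))
    (hmmono : StrictMonoOn m (Set.Ici 0))
    (hmlim : Tendsto m atTop (nhds 1))
    (σmax σmin : ℝ)
    (hσmax : IsGreatest (Set.range σ) σmax) (hσmin : IsLeast (Set.range σ) σmin)
    (hcond : σmin < σmax * m 0)
    (T : ℝ) (hT : 0 < T)
    (u₀ : Euc N → ℝ) (hu₀b : ∃ M : ℝ, ∀ x, |u₀ x| ≤ M)
    (hu₀lip : ∃ K : NNReal, LipschitzWith K u₀)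
    (uε : ℝ → Euc N → ℝ → ℝ)
    (huε : ∀ ε : ℝ, 0 < ε →
        IsParabolicSolution (fun x p => σ (ε⁻¹ • x) * m ‖p‖) u₀ T (uε ε)) :
    ¬ ∃ v : Euc N → ℝ → ℝ,
        ∀ K : Set (Euc N × ℝ), IsCompact K → (∀ q ∈ K, 0 ≤ q.2 ∧ q.2 < T) →
          ∀ δ > (0:ℝ), ∃ ε₀ > (0:ℝ), ∀ ε : ℝ, 0 < ε → ε < ε₀ →
            ∀ q ∈ K, |uε ε q.1 q.2 - v q.1 q.2| ≤ δ := by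
  rintro ⟨v, hv⟩
  obtain ⟨M₀, hM₀⟩ := hu₀b
  obtain ⟨K₀, hK₀⟩ := hu₀lip
  set L0 : ℝ := (K₀ : ℝ) with hL0def
  have hL0 : 0 ≤ L0 := K₀.coe_nonneg
  have hu₀L : ∀ x y : Euc N, u₀ x ≤ u₀ y + L0 * ‖x - y‖ := by
    intro x y
    have h1 := hK₀.dist_le_mul x y
    rw [Real.dist_eq, dist_eq_norm] at h1
    have h2 := le_abs_self (u₀ x - u₀ y)
    simp only [hL0def]
    linarith
  obtain ⟨xM, hxM⟩ := hσmax.1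
  obtain ⟨xm, hxm⟩ := hσmin.1
  have hσub : ∀ x, σ x ≤ σmax := fun x => hσmax.2 (Set.mem_range_self x)
  have hσlb : ∀ x, σmin ≤ σ x := fun x => hσmin.2 (Set.mem_range_self x)
  have hσmaxpos : 0 < σmax := hxM ▸ hσpos xM
  have hσminpos : 0 < σmin := hxm ▸ hσpos xm
  have hm0pos : 0 < m 0 := (hm01 0 le_rfl).1
  have hm0lt : m 0 < 1 := (hm01 0 le_rfl).2
  have hmge : ∀ r : ℝ, 0 ≤ r → m 0 ≤ m r := by
    intro r hr
    rcases eq_or_lt_of_le hr with h | h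
    · rw [← h]
    · exact (hmmono (Set.mem_Ici.mpr le_rfl) (Set.mem_Ici.mpr hr) h).le
  set cc : ℝ := σmax * m 0 - σmin with hcc
  have hccpos : 0 < cc := by simp only [hcc]; linarith
  set a0 : ℝ := (σmax - cc/8) * m 0 - cc/8 with ha0def
  set a1 : ℝ := σmin + cc/8 with ha1def
  set af : ℝ := σmin * m 0 / 2 with hafdef
  set ag : ℝ := σmax + 1 with hagdef
  have hσmaxω : 0 < σmax - cc/8 := by
    simp only [hcc]; nlinarith
  have ha1pos : 0 < a1 := by simp only [ha1def]; linarith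
  have hgap : a1 < a0 := by
    simp only [ha0def, ha1def, hcc]; nlinarith
  have ha0pos : 0 < a0 := lt_trans ha1pos hgap
  have hafpos : 0 < af := by simp only [hafdef]; positivity
  have hagpos : 0 < ag := by simp only [hagdef]; linarith
  have ha0le : a0 ≤ σmax + 1 := by
    simp only [ha0def, hcc]; nlinarith
  -- continuity balls around max / min points of σ
  have hballM : ∃ ρ1 > (0:ℝ), ∀ y : Euc N, ‖y - xM‖ ≤ ρ1 → σmax - cc/8 ≤ σ y := by
    obtain ⟨ρ1, hρ1, h2⟩ := Metric.continuousAt_iff.mp (hσc.continuousAt (x := xM)) (cc/8)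
      (by positivity)
    refine ⟨ρ1/2, by positivity, fun y hy => ?_⟩
    have h3 : dist y xM < ρ1 := by rw [dist_eq_norm]; linarith
    have h4 := h2 h3
    rw [Real.dist_eq, hxM] at h4
    have := (abs_lt.mp h4).1
    linarith
  have hballm : ∃ ρ1 > (0:ℝ), ∀ y : Euc N, ‖y - xm‖ ≤ ρ1 → σ y ≤ σmin + cc/8 := by
    obtain ⟨ρ1, hρ1, h2⟩ := Metric.continuousAt_iff.mp (hσc.continuousAt (x := xm)) (cc/8)
      (by positivity)
    refine ⟨ρ1/2, by positivity, fun y hy => ?_⟩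
    have h3 : dist y xm < ρ1 := by rw [dist_eq_norm]; linarith
    have h4 := h2 h3
    rw [Real.dist_eq, hxm] at h4
    have := (abs_lt.mp h4).2
    linarith
  obtain ⟨ρM, hρMpos, hρM⟩ := hballM
  obtain ⟨ρm, hρmpos, hρm⟩ := hballm
  set ρ : ℝ := min ρM ρm with hρdef
  have hρpos : 0 < ρ := lt_min hρMpos hρmpos
  have hρM2 : ∀ y : Euc N, ‖y - xM‖ ≤ ρ → σmax - cc/8 ≤ σ y :=
    fun y hy => hρM y (le_trans hy (min_le_left _ _))
  have hρm2 : ∀ y : Euc N, ‖y - xm‖ ≤ ρ → σ y ≤ σmin + cc/8 :=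
    fun y hy => hρm y (le_trans hy (min_le_right _ _))
  set tb : ℝ := T/2 with htbdef
  have htbpos : 0 < tb := by simp only [htbdef]; linarith
  have htbT : tb < T := by simp only [htbdef]; linarith
  have hM₀0 : 0 ≤ M₀ := le_trans (abs_nonneg _) (hM₀ xM)
  set Q : ℝ := 2*M₀ + 1 + (σmax + 1)*T with hQdef
  have hQpos : 0 < Q := by simp only [hQdef]; nlinarith
  set B : ℝ := Q/ρ + L0 + 1 with hBdef
  have hBpos : 0 < B := by simp only [hBdef]; positivity
  have hρB : Q ≤ ρ * B := by
    have h1 : ρ * (Q / ρ) = Q := by field_simp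
    simp only [hBdef]
    nlinarith [mul_nonneg hρpos.le (by linarith : (0:ℝ) ≤ L0 + 1)]
  set Gap : ℝ := (a0 - a1) * tb with hGapdef
  have hGapPos : 0 < Gap := by
    simp only [hGapdef]; exact mul_pos (by linarith) htbpos
  set θ : ℝ := Gap/16 with hθdef
  have hθpos : 0 < θ := by simp only [hθdef]; linarith
  set Kset : Set (Euc N × ℝ) := Metric.closedBall (0 : Euc N) 1 ×ˢ Icc (0:ℝ) tb with hKsetdef
  have hKcomp : IsCompact Kset := (isCompact_closedBall _ _).prod isCompact_Icc
  have hKsub : ∀ q ∈ Kset, 0 ≤ q.2 ∧ q.2 < T := fun q hq =>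
    ⟨hq.2.1, lt_of_le_of_lt hq.2.2 htbT⟩
  obtain ⟨ε₀, hε₀pos, hε₀⟩ := hv Kset hKcomp hKsub θ hθpos
  -- the reference solution at scale ε₀/2 and its continuity at (0, tb)
  obtain ⟨hw0, hwc, -, -, -⟩ := huε (ε₀/2) (by linarith)
  have hq0S : ((0 : Euc N), tb) ∈ {q : Euc N × ℝ | 0 ≤ q.2 ∧ q.2 < T} := ⟨htbpos.le, htbT⟩
  obtain ⟨r, hrpos, hr⟩ := Metric.continuousWithinAt_iff.mp (hwc ((0:Euc N), tb) hq0S) θ hθpos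
  set SN : ℝ := Real.sqrt N + 1 with hSNdef
  have hSNpos : 0 < SN := by
    simp only [hSNdef]; positivity
  have hsqSN : Real.sqrt N ≤ SN := by simp only [hSNdef]; linarith
  -- choice of ε
  set ε : ℝ := min (min 1 (ε₀/2))
      (min (min (θ/(B+1)) (1/SN)) (min (r/(2*SN)) (θ/((2*L0+2)*SN)))) with hεdef
  have hεpos : 0 < ε := by
    simp only [hεdef]
    refine lt_min (lt_min one_pos (by linarith only [hε₀pos]))
      (lt_min (lt_min (by positivity) (by positivity)) (lt_min (by positivity) (by positivity)))
  have hε1 : ε ≤ 1 := le_trans (min_le_left _ _) (min_le_left _ _)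
  have hεε₀ : ε < ε₀ := lt_of_le_of_lt (le_trans (min_le_left _ _) (min_le_right _ _))
    (by linarith only [hε₀pos])
  have hbnd1 : ε ≤ θ/(B+1) :=
    le_trans (min_le_right _ _) (le_trans (min_le_left _ _) (min_le_left _ _))
  have hbnd2 : ε ≤ 1/SN :=
    le_trans (min_le_right _ _) (le_trans (min_le_left _ _) (min_le_right _ _))
  have hbnd3 : ε ≤ r/(2*SN) :=
    le_trans (min_le_right _ _) (le_trans (min_le_right _ _) (min_le_left _ _))
  have hbnd4 : ε ≤ θ/((2*L0+2)*SN) :=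
    le_trans (min_le_right _ _) (le_trans (min_le_right _ _) (min_le_right _ _))
  clear_value L0 cc a0 a1 af ag ρ tb Q B Gap θ SN ε
  have hεB : B * ε ≤ θ := by
    have h1 : ε ≤ θ/(B+1) := hbnd1
    have h2 : B * ε ≤ B * (θ/(B+1)) := mul_le_mul_of_nonneg_left h1 hBpos.le
    have h3 : B * (θ/(B+1)) ≤ θ := by
      rw [mul_comm, div_mul_eq_mul_div, div_le_iff₀ (by linarith only [hBpos] : (0:ℝ) < B+1)]
      have := mul_le_mul_of_nonneg_left (by linarith only [hBpos] : B ≤ B+1) hθpos.le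
      linarith only [this]
    linarith only [h2, h3]
  have hεSN : ε * Real.sqrt N ≤ 1 := by
    have h1 : ε ≤ 1/SN := hbnd2
    have h2 : ε * Real.sqrt N ≤ (1/SN) * SN :=
      mul_le_mul h1 hsqSN (Real.sqrt_nonneg _) (by positivity)
    have h3 : (1/SN) * SN = 1 := by field_simp
    linarith only [h2, h3]
  have hεr : ε * SN < r := by
    have h1 : ε ≤ r/(2*SN) := hbnd3
    have h2 : ε * SN ≤ (r/(2*SN)) * SN := mul_le_mul_of_nonneg_right h1 hSNpos.le
    have h3 : (r/(2*SN)) * SN = r/2 := by field_simp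
    linarith only [h2, h3, hrpos]
  have hεL : (2*L0+2) * SN * ε ≤ θ := by
    have h1 : ε ≤ θ/((2*L0+2)*SN) := hbnd4
    have h2 : (0:ℝ) < (2*L0+2)*SN := by positivity
    have h3 : (2*L0+2)*SN*ε ≤ (2*L0+2)*SN * (θ/((2*L0+2)*SN)) :=
      mul_le_mul_of_nonneg_left h1 h2.le
    have h4 : (2*L0+2)*SN * (θ/((2*L0+2)*SN)) = θ := by field_simp
    linarith only [h3, h4]
  -- lattice translated points
  have hfr : ∀ w : Euc N, ∀ i : Fin N, |(w + intVec (fun j => -⌊w j⌋)) i| ≤ 1 := by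
    intro w i
    have h1 : (w + intVec (fun j => -⌊w j⌋)) i = w i - ⌊w i⌋ := by
      show w i + ((-⌊w i⌋ : ℤ) : ℝ) = _
      push_cast; ring
    rw [h1]
    have h2 := Int.floor_le (w i)
    have h3 := Int.lt_floor_add_one (w i)
    rw [abs_le]
    exact ⟨by linarith only [h2], by linarith only [h3]⟩
  set x0 : Euc N := ε • (xM + intVec (fun j => -⌊xM j⌋)) with hx0def
  set x1 : Euc N := ε • (xm + intVec (fun j => -⌊xm j⌋)) with hx1def
  have hx0n : ‖x0‖ ≤ ε * Real.sqrt N := by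
    simp only [hx0def]
    rw [norm_smul, Real.norm_eq_abs, abs_of_pos hεpos]
    exact mul_le_mul_of_nonneg_left (norm_le_sqrt_card _ (hfr xM)) hεpos.le
  have hx1n : ‖x1‖ ≤ ε * Real.sqrt N := by
    simp only [hx1def]
    rw [norm_smul, Real.norm_eq_abs, abs_of_pos hεpos]
    exact mul_le_mul_of_nonneg_left (norm_le_sqrt_card _ (hfr xm)) hεpos.le
  have hεinv0 : ε⁻¹ • x0 = xM + intVec (fun j => -⌊xM j⌋) := by
    simp only [hx0def]
    rw [smul_smul, inv_mul_cancel₀ hεpos.ne', one_smul]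
  have hεinv1 : ε⁻¹ • x1 = xm + intVec (fun j => -⌊xm j⌋) := by
    simp only [hx1def]
    rw [smul_smul, inv_mul_cancel₀ hεpos.ne', one_smul]
  have hσnear0 : ∀ x : Euc N, ‖x - x0‖ ≤ ρ * ε → σmax - cc/8 ≤ σ (ε⁻¹ • x) := by
    intro x hx
    have hkey : ε⁻¹ • x =
        (ε⁻¹ • x - intVec (fun j => -⌊xM j⌋)) + intVec (fun j => -⌊xM j⌋) := by abel
    rw [hkey, hσp]
    apply hρM2
    have h5 : ε⁻¹ • x - intVec (fun j => -⌊xM j⌋) - xM = ε⁻¹ • (x - x0) := by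
      rw [smul_sub, hεinv0]; abel
    rw [h5, norm_smul, Real.norm_eq_abs, abs_of_pos (inv_pos.mpr hεpos)]
    have h6 : ε⁻¹ * ‖x - x0‖ ≤ ε⁻¹ * (ρ * ε) :=
      mul_le_mul_of_nonneg_left hx (by positivity)
    have h7 : ε⁻¹ * (ρ * ε) = ρ := by field_simp
    linarith only [h6, h7]
  have hσnear1 : ∀ x : Euc N, ‖x - x1‖ ≤ ρ * ε → σ (ε⁻¹ • x) ≤ σmin + cc/8 := by
    intro x hx
    have hkey : ε⁻¹ • x =
        (ε⁻¹ • x - intVec (fun j => -⌊xm j⌋)) + intVec (fun j => -⌊xm j⌋) := by abel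
    rw [hkey, hσp]
    apply hρm2
    have h5 : ε⁻¹ • x - intVec (fun j => -⌊xm j⌋) - xm = ε⁻¹ • (x - x1) := by
      rw [smul_sub, hεinv1]; abel
    rw [h5, norm_smul, Real.norm_eq_abs, abs_of_pos (inv_pos.mpr hεpos)]
    have h6 : ε⁻¹ * ‖x - x1‖ ≤ ε⁻¹ * (ρ * ε) :=
      mul_le_mul_of_nonneg_left hx (by positivity)
    have h7 : ε⁻¹ * (ρ * ε) = ρ := by field_simp
    linarith only [h6, h7]
  -- parameters for the barriers
  have hsolε := huε ε hεpos
  set b : ℝ := B/ε with hbdef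
  clear_value b
  have hbpos : 0 < b := by rw [hbdef]; positivity
  have hBb : B ≤ b := by
    simp only [hbdef]
    rw [le_div_iff₀ hεpos]
    have := mul_le_mul_of_nonneg_left hε1 hBpos.le
    linarith only [this]
  have hbL0 : L0 ≤ b := by
    refine le_trans ?_ hBb
    simp only [hBdef]
    have := div_nonneg hQpos.le hρpos.le
    linarith only [this]
  have hbQρ : ∀ s : ℝ, b * s ≤ Q → s ≤ ρ * ε := by
    intro s hs
    have h8 : b * s ≤ ρ * B := le_trans hs hρB
    have h9 : b * (ρ * ε) = ρ * B := by
      simp only [hbdef]; field_simp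
    have := h8.trans_eq h9.symm
    exact le_of_mul_le_mul_left this hbpos
  -- upper bound at x0 (near the maximum of σ)
  have hballup : ∀ (x : Euc N) (t : ℝ), 0 ≤ t → t < T →
      u₀ x0 - a0 * t + b * Real.sqrt ((ε^2) ^ 2 + ‖x - x0‖ ^ 2) ≤ (M₀ + 1) - af * t →
      ∀ p : Euc N, a0 < σ (ε⁻¹ • x) * m ‖p‖ := by
    intro x t ht htT' hineq p
    have hs := le_sqrt_add_sq (ε^2) ‖x - x0‖ (norm_nonneg _)
    have h1 : b * ‖x - x0‖ ≤ Q := by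
      have h2 : -M₀ ≤ u₀ x0 := by have := (abs_le.mp (hM₀ x0)).1; linarith
      have h3 : a0 * t ≤ a0 * T := mul_le_mul_of_nonneg_left htT'.le ha0pos.le
      have h5 : a0 * T ≤ (σmax+1) * T := mul_le_mul_of_nonneg_right ha0le hT.le
      have h4 : 0 ≤ af * t := mul_nonneg hafpos.le ht
      have h6 : b * ‖x - x0‖ ≤ b * Real.sqrt ((ε^2)^2 + ‖x - x0‖^2) :=
        mul_le_mul_of_nonneg_left hs hbpos.le
      simp only [hQdef]
      linarith only [hineq, h2, h3, h4, h5, h6]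
    have h7 := hbQρ _ h1
    have h10 := hσnear0 x h7
    have h11 : (σmax - cc/8) * m 0 ≤ σ (ε⁻¹ • x) * m ‖p‖ :=
      mul_le_mul h10 (hmge _ (norm_nonneg _)) hm0pos.le (hσpos _).le
    have h12 : a0 < (σmax - cc/8) * m 0 := by
      simp only [ha0def]; linarith only [hccpos]
    linarith only [h11, h12]
  have hFup : ∀ (x p : Euc N), af < σ (ε⁻¹ • x) * m ‖p‖ := by
    intro x p
    have h1 : σmin * m 0 ≤ σ (ε⁻¹ • x) * m ‖p‖ :=
      mul_le_mul (hσlb _) (hmge _ (norm_nonneg _)) hm0pos.le (hσpos _).le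
    have h2 : 0 < σmin * m 0 := mul_pos hσminpos hm0pos
    simp only [hafdef]
    linarith only [h1, h2]
  have hI1up : ∀ x : Euc N, u₀ x ≤ u₀ x0 + b * Real.sqrt ((ε^2) ^ 2 + ‖x - x0‖ ^ 2) := by
    intro x
    have h1 := hu₀L x x0
    have h2 : L0 * ‖x - x0‖ ≤ b * ‖x - x0‖ :=
      mul_le_mul_of_nonneg_right hbL0 (norm_nonneg _)
    have h3 : b * ‖x - x0‖ ≤ b * Real.sqrt ((ε^2)^2 + ‖x - x0‖^2) :=
      mul_le_mul_of_nonneg_left (le_sqrt_add_sq (ε^2) _ (norm_nonneg _)) hbpos.le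
    linarith only [h1, h2, h3]
  have hI2up : ∀ x : Euc N, u₀ x ≤ M₀ + 1 := by
    intro x
    have := (abs_le.mp (hM₀ x)).2
    linarith only [this]
  have hUP := comparison_up (fun x p => σ (ε⁻¹ • x) * m ‖p‖) u₀ T hT (uε ε) hsolε x0
    (u₀ x0) (M₀ + 1) a0 af b (ε^2) (by positivity) hbpos.le ha0pos.le hafpos.le
    hI1up hI2up hballup hFup x0 tb htbpos.le htbT
  -- lower bound at x1 (near the minimum of σ)
  have hballlow : ∀ (x : Euc N) (t : ℝ), 0 ≤ t → t < T →
      -(M₀ + 1) - ag * t ≤ u₀ x1 - a1 * t - b * Real.sqrt ((ε^2) ^ 2 + ‖x - x1‖ ^ 2) →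
      ∀ p : Euc N, σ (ε⁻¹ • x) * m ‖p‖ < a1 := by
    intro x t ht htT' hineq p
    have hs := le_sqrt_add_sq (ε^2) ‖x - x1‖ (norm_nonneg _)
    have h1 : b * ‖x - x1‖ ≤ Q := by
      have h2 : u₀ x1 ≤ M₀ := le_trans (le_abs_self _) (hM₀ x1)
      have h3 : ag * t ≤ ag * T := mul_le_mul_of_nonneg_left htT'.le hagpos.le
      have h4 : 0 ≤ a1 * t := mul_nonneg ha1pos.le ht
      have h6 : b * ‖x - x1‖ ≤ b * Real.sqrt ((ε^2)^2 + ‖x - x1‖^2) :=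
        mul_le_mul_of_nonneg_left hs hbpos.le
      simp only [hQdef]
      have h8 : ag * T = (σmax+1) * T := by rw [hagdef]
      linarith only [hineq, h2, h3, h4, h6, h8]
    have h7 := hbQρ _ h1
    have h10 := hσnear1 x h7
    have hmp := hm01 ‖p‖ (norm_nonneg p)
    have h11 : σ (ε⁻¹ • x) * m ‖p‖ ≤ (σmin + cc/8) * m ‖p‖ :=
      mul_le_mul_of_nonneg_right h10 hmp.1.le
    have h12 : (σmin + cc/8) * m ‖p‖ < (σmin + cc/8) * 1 := by
      have : 0 < σmin + cc/8 := by linarith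
      exact mul_lt_mul_of_pos_left hmp.2 this
    simp only [ha1def]
    linarith only [h11, h12]
  have hFlow : ∀ (x p : Euc N), σ (ε⁻¹ • x) * m ‖p‖ < ag := by
    intro x p
    have hmp := hm01 ‖p‖ (norm_nonneg p)
    have h1 : σ (ε⁻¹ • x) * m ‖p‖ ≤ σmax * m ‖p‖ :=
      mul_le_mul_of_nonneg_right (hσub _) hmp.1.le
    have h2 : σmax * m ‖p‖ < σmax * 1 := mul_lt_mul_of_pos_left hmp.2 hσmaxpos
    simp only [hagdef]
    linarith only [h1, h2]
  have hI1low : ∀ x : Euc N, u₀ x1 - b * Real.sqrt ((ε^2) ^ 2 + ‖x - x1‖ ^ 2) ≤ u₀ x := by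
    intro x
    have h1 := hu₀L x1 x
    have h4 : ‖x1 - x‖ = ‖x - x1‖ := norm_sub_rev _ _
    have h2 : L0 * ‖x - x1‖ ≤ b * ‖x - x1‖ :=
      mul_le_mul_of_nonneg_right hbL0 (norm_nonneg _)
    have h3 : b * ‖x - x1‖ ≤ b * Real.sqrt ((ε^2)^2 + ‖x - x1‖^2) :=
      mul_le_mul_of_nonneg_left (le_sqrt_add_sq (ε^2) _ (norm_nonneg _)) hbpos.le
    rw [h4] at h1
    linarith only [h1, h2, h3]
  have hI2low : ∀ x : Euc N, -(M₀ + 1) ≤ u₀ x := by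
    intro x
    have := (abs_le.mp (hM₀ x)).1
    linarith only [this]
  have hLOW := comparison_low (fun x p => σ (ε⁻¹ • x) * m ‖p‖) u₀ T hT (uε ε) hsolε x1
    (u₀ x1) (-(M₀ + 1)) a1 ag b (ε^2) (by positivity) hbpos.le ha1pos.le hagpos.le
    hI1low hI2low hballlow hFlow x1 tb htbpos.le htbT
  -- evaluate the barriers at the centers
  have hbε : b * ε^2 = B * ε := by
    simp only [hbdef]; field_simp
  have hx00 : Real.sqrt ((ε^2)^2 + ‖x0 - x0‖^2) = ε^2 := by
    rw [sub_self, norm_zero]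
    rw [show ((0:ℝ))^2 = 0 by norm_num, add_zero]
    exact Real.sqrt_sq (sq_nonneg ε)
  have hx11 : Real.sqrt ((ε^2)^2 + ‖x1 - x1‖^2) = ε^2 := by
    rw [sub_self, norm_zero]
    rw [show ((0:ℝ))^2 = 0 by norm_num, add_zero]
    exact Real.sqrt_sq (sq_nonneg ε)
  have hUP0 : uε ε x0 tb ≤ u₀ x0 - a0 * tb + θ := by
    rw [hx00, hbε] at hUP
    linarith only [hUP, hεB]
  have hLOW0 : u₀ x1 - a1 * tb - θ ≤ uε ε x1 tb := by
    rw [hx11, hbε] at hLOW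
    linarith only [hLOW, hεB]
  -- membership in the compact set
  have hx0K : ((x0, tb) : Euc N × ℝ) ∈ Kset := by
    refine ⟨?_, htbpos.le, le_refl tb⟩
    rw [Metric.mem_closedBall, dist_zero_right]
    calc ‖x0‖ ≤ ε * Real.sqrt N := hx0n
    _ ≤ 1 := hεSN
  have hx1K : ((x1, tb) : Euc N × ℝ) ∈ Kset := by
    refine ⟨?_, htbpos.le, le_refl tb⟩
    rw [Metric.mem_closedBall, dist_zero_right]
    calc ‖x1‖ ≤ ε * Real.sqrt N := hx1n
    _ ≤ 1 := hεSN
  have hv0 : |uε ε x0 tb - v x0 tb| ≤ θ := hε₀ ε hεpos hεε₀ (x0, tb) hx0K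
  have hv1 : |uε ε x1 tb - v x1 tb| ≤ θ := hε₀ ε hεpos hεε₀ (x1, tb) hx1K
  have hw0' : |uε (ε₀/2) x0 tb - v x0 tb| ≤ θ :=
    hε₀ (ε₀/2) (by linarith) (by linarith) (x0, tb) hx0K
  have hw1' : |uε (ε₀/2) x1 tb - v x1 tb| ≤ θ :=
    hε₀ (ε₀/2) (by linarith) (by linarith) (x1, tb) hx1K
  -- continuity of the reference solution at (0, tb)
  have hd0 : dist ((x0, tb) : Euc N × ℝ) ((0:Euc N), tb) < r := by
    have heq : dist ((x0, tb) : Euc N × ℝ) ((0:Euc N), tb) = dist x0 0 := by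
      simp [Prod.dist_eq, dist_nonneg]
    rw [heq, dist_zero_right]
    have h2 : ε * Real.sqrt N ≤ ε * SN := mul_le_mul_of_nonneg_left hsqSN hεpos.le
    linarith only [hx0n, h2, hεr]
  have hd1 : dist ((x1, tb) : Euc N × ℝ) ((0:Euc N), tb) < r := by
    have heq : dist ((x1, tb) : Euc N × ℝ) ((0:Euc N), tb) = dist x1 0 := by
      simp [Prod.dist_eq, dist_nonneg]
    rw [heq, dist_zero_right]
    have h2 : ε * Real.sqrt N ≤ ε * SN := mul_le_mul_of_nonneg_left hsqSN hεpos.le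
    linarith only [hx1n, h2, hεr]
  have hc0 : |uε (ε₀/2) x0 tb - uε (ε₀/2) 0 tb| < θ := by
    have := hr (show ((x0, tb) : Euc N × ℝ) ∈ {q : Euc N × ℝ | 0 ≤ q.2 ∧ q.2 < T}
      from ⟨htbpos.le, htbT⟩) hd0
    rw [Real.dist_eq] at this
    exact this
  have hc1 : |uε (ε₀/2) x1 tb - uε (ε₀/2) 0 tb| < θ := by
    have := hr (show ((x1, tb) : Euc N × ℝ) ∈ {q : Euc N × ℝ | 0 ≤ q.2 ∧ q.2 < T}
      from ⟨htbpos.le, htbT⟩) hd1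
    rw [Real.dist_eq] at this
    exact this
  -- u₀ values at the two centers are close
  have hu01 : |u₀ x0 - u₀ x1| ≤ θ := by
    have h1 := hu₀L x0 x1
    have h2 := hu₀L x1 x0
    have h3 : ‖x0 - x1‖ ≤ 2 * (ε * SN) := by
      have h5 : ε * Real.sqrt N ≤ ε * SN := mul_le_mul_of_nonneg_left hsqSN hεpos.le
      calc ‖x0 - x1‖ ≤ ‖x0‖ + ‖x1‖ := norm_sub_le _ _
      _ ≤ ε * Real.sqrt N + ε * Real.sqrt N := add_le_add hx0n hx1n
      _ ≤ 2*(ε*SN) := by linarith only [h5]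
    have h4 : ‖x1 - x0‖ = ‖x0 - x1‖ := norm_sub_rev _ _
    have h5 : L0 * ‖x0 - x1‖ ≤ θ := by
      have h6 : L0 * ‖x0 - x1‖ ≤ L0 * (2*(ε*SN)) := mul_le_mul_of_nonneg_left h3 hL0
      have h7 : L0 * (2*(ε*SN)) ≤ (2*L0+2)*SN*ε := by
        nlinarith only [mul_nonneg hSNpos.le hεpos.le]
      linarith only [h6, h7, hεL]
    rw [abs_le]
    constructor
    · rw [h4] at h2; linarith only [h2, h5]
    · linarith only [h1, h5]
  -- final contradiction
  have e1 := abs_le.mp hv0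
  have e2 := abs_le.mp hv1
  have e3 := abs_le.mp hw0'
  have e4 := abs_le.mp hw1'
  have e5 := abs_lt.mp hc0
  have e6 := abs_lt.mp hc1
  have e7 := abs_le.mp hu01
  have hfin1 : uε (ε₀/2) 0 tb ≤ u₀ x0 - a0 * tb + 4*θ := by
    linarith only [e5.1, e5.2, e3.1, e3.2, e1.1, e1.2, hUP0]
  have hfin2 : u₀ x1 - a1 * tb - 4*θ ≤ uε (ε₀/2) 0 tb := by
    linarith only [e6.1, e6.2, e4.1, e4.2, e2.1, e2.2, hLOW0]
  have hfinal : Gap ≤ 9*θ := by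
    simp only [hGapdef]
    linarith only [hfin1, hfin2, e7.1, e7.2]
  rw [hθdef] at hfinal
  linarith only [hfinal, hGapPos]
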